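/- Let Δ : Matrix (α ⊕ β) (α ⊕ β) ℝ be symmetric and positive semidefinite with the block Δ₁₁ invertible, and fix y : β → ℝ. Define x_U : α → ℝ by x_U = -Δ₁₁⁻¹.mulVec (Δ₁₂.mulVec y). Then for every u : α → ℝ, the quadratic form satisfies (Sum.elim x_U y) ⬝ᵥ Δ.mulVec (Sum.elim x_U y) ≤ (Sum.elim u y) ⬝ᵥ Δ.mulVec (Sum.elim u y); i.e., the harmonic extension x_U = -Δ[U,U]⁻¹Δ[U,B]y minimizes the Dirichlet energy among all vectors agreeing with y on the boundary. (Classical harmonic extension minimizes the Dirichlet energy.) -/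

import Mathlib

open Matrix

/-- Classical harmonic extension minimizes the Dirichlet energy: with `Δ` symmetric
positive semidefinite and `Δ₁₁` invertible, `x_U = -Δ₁₁⁻¹ Δ₁₂ y` minimizes the
quadratic form among all vectors agreeing with `y` on the boundary. -/
theorem classical_harmonic_extension_minimizes
    {α β : Type*} [Fintype α] [Fintype β] [DecidableEq α] [DecidableEq β]
    (Δ : Matrix (α ⊕ β) (α ⊕ β) ℝ) (hsymm : Δ.IsSymm) (hpsd : Δ.PosSemidef)
    (hinv : IsUnit (Δ.toBlocks₁₁).det)
    (y : β → ℝ) (x_U : α → ℝ)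
    (hxU : x_U = -((Δ.toBlocks₁₁)⁻¹.mulVec ((Δ.toBlocks₁₂).mulVec y))) :
    ∀ u : α → ℝ,
      (Sum.elim x_U y) ⬝ᵥ Δ.mulVec (Sum.elim x_U y)
        ≤ (Sum.elim u y) ⬝ᵥ Δ.mulVec (Sum.elim u y) := by
  intro u
  set w : (α ⊕ β) → ℝ := Sum.elim x_U y with hw
  have hkey : ∀ a, Δ.mulVec w (Sum.inl a) = 0 := by
    intro a
    have h1 : Δ.mulVec w (Sum.inl a)
        = (Δ.toBlocks₁₁.mulVec x_U) a + (Δ.toBlocks₁₂.mulVec y) a := by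
      simp [Matrix.mulVec, dotProduct, Fintype.sum_sum_type,
        Matrix.toBlocks₁₁, Matrix.toBlocks₁₂, hw]
    have h2 : Δ.toBlocks₁₁.mulVec x_U = -(Δ.toBlocks₁₂.mulVec y) := by
      rw [hxU, Matrix.mulVec_neg, Matrix.mulVec_mulVec,
        Matrix.mul_nonsing_inv _ hinv, Matrix.one_mulVec]
    rw [h1, h2]
    simp
  set z : (α ⊕ β) → ℝ := Sum.elim (u - x_U) 0 with hz
  have hv : Sum.elim u y = w + z := by
    funext i; cases i <;> simp [hw, hz]
  have hcross : z ⬝ᵥ Δ.mulVec w = 0 := by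
    rw [dotProduct, Fintype.sum_sum_type]
    simp [hkey, hz]
  have hcross2 : w ⬝ᵥ Δ.mulVec z = 0 := by
    rw [Matrix.dotProduct_mulVec, ← Matrix.mulVec_transpose, hsymm.eq,
      dotProduct_comm]
    exact hcross
  have hzz : 0 ≤ z ⬝ᵥ Δ.mulVec z := by
    have := hpsd.dotProduct_mulVec_nonneg z
    simpa using this
  rw [hv]
  calc w ⬝ᵥ Δ.mulVec w ≤ w ⬝ᵥ Δ.mulVec w + z ⬝ᵥ Δ.mulVec z := le_add_of_nonneg_right hzz
    _ = (w + z) ⬝ᵥ Δ.mulVec (w + z) := by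
        rw [Matrix.mulVec_add, add_dotProduct, dotProduct_add,
          dotProduct_add, hcross, hcross2]
        ring
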